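/- Let X be a compact metric space, φ a continuous flow on X, and a : X → M_n(ℂ) continuous with values in the Hermitian positive semidefinite matrices. Suppose that for every x ∈ X, ⋂_{s∈ℝ} ker(a(φ_s(x))) = {0}. Then there exists T > 0 such that for all x ∈ X and all unit vectors y ∈ ℂⁿ, ∫₀ᵀ ⟨a(φ_t(x)) y, y⟩ dt > 0. -/

import Mathlib

open Matrix
open scoped ComplexOrder

/-- Compactness argument: if the geometric control condition holds (along every orbit of the
flow the kernels of `a` intersect trivially), then there is a uniform time `T > 0` such that
`∫₀ᵀ ⟨a(φ_t x) y, y⟩ dt > 0` for every `x` and every unit vector `y`. -/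
theorem stmt_11 {n : ℕ} {X : Type*} [MetricSpace X] [CompactSpace X]
    (φ : ℝ → X → X) (hφ_cont : Continuous fun p : ℝ × X => φ p.1 p.2)
    (hφ0 : ∀ x, φ 0 x = x) (hφ_add : ∀ s t x, φ (s + t) x = φ t (φ s x))
    (a : X → Matrix (Fin n) (Fin n) ℂ) (ha_cont : Continuous a)
    (ha_psd : ∀ x, (a x).PosSemidef)
    (hGCC : ∀ x : X, ∀ v : Fin n → ℂ, (∀ s : ℝ, a (φ s x) *ᵥ v = 0) → v = 0) :
    ∃ T : ℝ, 0 < T ∧ ∀ x : X, ∀ y : Fin n → ℂ, star y ⬝ᵥ y = 1 →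
      0 < ∫ t in (0:ℝ)..T, (star y ⬝ᵥ (a (φ t x) *ᵥ y)).re := by
  classical
  set F : (X × (Fin n → ℂ)) → ℝ → ℝ :=
    fun p t => (star p.2 ⬝ᵥ (a (φ t p.1) *ᵥ p.2)).re with hFdef
  -- continuity of the integrand, jointly
  have hA_cont : Continuous fun q : (X × (Fin n → ℂ)) × ℝ => a (φ q.2 q.1.1) :=
    ha_cont.comp (hφ_cont.comp (continuous_snd.prodMk (continuous_fst.comp continuous_fst)))
  have hFc : Continuous (Function.uncurry F) := by
    simp only [Function.uncurry, hFdef, Matrix.mulVec, dotProduct]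
    refine Complex.continuous_re.comp (continuous_finset_sum _ fun i _ => ?_)
    refine Continuous.mul (continuous_star.comp ?_) (continuous_finset_sum _ fun j _ => ?_)
    · exact (continuous_apply i).comp (continuous_snd.comp continuous_fst)
    · exact (((continuous_apply j).comp ((continuous_apply i).comp hA_cont)).mul
        ((continuous_apply j).comp (continuous_snd.comp continuous_fst)))
  have hFt : ∀ p, Continuous fun t => F p t := by
    intro p
    exact hFc.comp (continuous_const.prodMk continuous_id)
  have hF_nonneg : ∀ p t, 0 ≤ F p t := by
    intro p t
    have h0 : 0 ≤ star p.2 ⬝ᵥ ((a (φ t p.1)) *ᵥ p.2) := (ha_psd _).dotProduct_mulVec_nonneg p.2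
    rw [Complex.le_def] at h0
    simpa using h0.1
  -- pointwise: along the forward orbit the matrix cannot kill a nonzero vector forever
  have forward : ∀ (x : X) (y : Fin n → ℂ), y ≠ 0 → ∃ t : ℝ, 0 ≤ t ∧ a (φ t x) *ᵥ y ≠ 0 := by
    intro x y hy
    by_contra hcon
    push_neg at hcon
    have h : ∀ t : ℝ, 0 ≤ t → a (φ t x) *ᵥ y = 0 := fun t ht => hcon t ht
    obtain ⟨z, u, hu_mono, hu_tend⟩ := CompactSpace.tendsto_subseq (fun k : ℕ => φ (k : ℝ) x)
    refine hy (hGCC z y ?_)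
    intro s
    have hmv : Continuous fun M : Matrix (Fin n) (Fin n) ℂ => M *ᵥ y := by
      refine continuous_pi fun i => ?_
      simp only [Matrix.mulVec, dotProduct]
      exact continuous_finset_sum _ fun j _ =>
        (continuous_id.matrix_elem i j).mul continuous_const
    have hφs : Continuous fun w : X => φ s w :=
      hφ_cont.comp (continuous_const.prodMk continuous_id)
    have h2 : Filter.Tendsto (fun k => a (φ s (φ (u k : ℝ) x)) *ᵥ y)
        Filter.atTop (nhds (a (φ s z) *ᵥ y)) :=
      ((hmv.comp (ha_cont.comp hφs)).tendsto z).comp hu_tend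
    have hEv : ∀ᶠ k in Filter.atTop, a (φ s (φ (u k : ℝ) x)) *ᵥ y = 0 := by
      filter_upwards [Filter.eventually_ge_atTop ⌈-s⌉₊] with k hk
      have hk' : (0:ℝ) ≤ (u k : ℝ) + s := by
        have h1 : (⌈-s⌉₊ : ℝ) ≥ -s := Nat.le_ceil _
        have h2' : (k : ℝ) ≤ (u k : ℝ) := by exact_mod_cast hu_mono.le_apply
        have h3 : (⌈-s⌉₊ : ℝ) ≤ (k : ℝ) := by exact_mod_cast hk
        linarith
      have := h ((u k : ℝ) + s) hk'
      rwa [hφ_add (u k : ℝ) s x] at this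
    have h3 : Filter.Tendsto (fun _ : ℕ => (0 : Fin n → ℂ))
        Filter.atTop (nhds (a (φ s z) *ᵥ y)) := (Filter.tendsto_congr' hEv).mp h2
    exact tendsto_nhds_unique h3 tendsto_const_nhds
  -- the unit sphere is compact
  have hS_cpt : IsCompact {y : Fin n → ℂ | star y ⬝ᵥ y = 1} := by
    rw [Metric.isCompact_iff_isClosed_bounded]
    constructor
    · exact isClosed_eq (by
        simp only [dotProduct]
        exact continuous_finset_sum _ fun i _ =>
          ((continuous_apply i).star).mul (continuous_apply i)) continuous_const
    · refine (Metric.isBounded_closedBall (x := (0 : Fin n → ℂ)) (r := 1)).subset ?_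
      intro y hy
      rw [Metric.mem_closedBall, dist_zero_right]
      have hre : (1:ℂ).re = ∑ i, Complex.normSq (y i) := by
        rw [← hy]
        simp [dotProduct, Complex.normSq_eq_conj_mul_self, Complex.normSq_apply]
      simp only [Complex.one_re] at hre
      rw [pi_norm_le_iff_of_nonneg zero_le_one]
      intro i
      have h1 : Complex.normSq (y i) ≤ 1 := hre ▸
        Finset.single_le_sum (fun j _ => Complex.normSq_nonneg _) (Finset.mem_univ i)
      have := Complex.sq_norm (y i)
      nlinarith [norm_nonneg (y i)]
  have hK_cpt : IsCompact ((Set.univ : Set X) ×ˢ {y : Fin n → ℂ | star y ⬝ᵥ y = 1}) :=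
    isCompact_univ.prod hS_cpt
  -- open sets
  have hInt_cont : ∀ m : ℕ, Continuous fun p : X × (Fin n → ℂ) =>
      ∫ t in (0:ℝ)..((m:ℝ)+1), F p t := fun m =>
    intervalIntegral.continuous_parametric_intervalIntegral_of_continuous' hFc 0 ((m:ℝ)+1)
  have hU_open : ∀ m : ℕ, IsOpen {p : X × (Fin n → ℂ) | 0 < ∫ t in (0:ℝ)..((m:ℝ)+1), F p t} :=
    fun m => isOpen_lt continuous_const (hInt_cont m)
  -- cover
  have hcover : ((Set.univ : Set X) ×ˢ {y : Fin n → ℂ | star y ⬝ᵥ y = 1}) ⊆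
      ⋃ m : ℕ, {p : X × (Fin n → ℂ) | 0 < ∫ t in (0:ℝ)..((m:ℝ)+1), F p t} := by
    rintro ⟨x, y⟩ ⟨-, hy⟩
    have hy0 : y ≠ 0 := by
      intro h0
      rw [h0] at hy
      simp at hy
    obtain ⟨t, ht0, htne⟩ := forward x y hy0
    have hFt_pos : 0 < F (x, y) t := by
      have h0 : 0 ≤ star y ⬝ᵥ ((a (φ t x)) *ᵥ y) := (ha_psd _).dotProduct_mulVec_nonneg y
      have hne : star y ⬝ᵥ ((a (φ t x)) *ᵥ y) ≠ 0 := fun hc =>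
        htne (((ha_psd _).dotProduct_mulVec_zero_iff y).mp hc)
      rw [Complex.le_def] at h0
      rcases lt_or_eq_of_le h0.1 with h1 | h1
      · simpa [hFdef] using h1
      · exact absurd (Complex.ext h1.symm (by simpa using h0.2.symm)) hne
    refine Set.mem_iUnion.mpr ⟨⌈t⌉₊, ?_⟩
    have htlt : t < (⌈t⌉₊ : ℝ) + 1 := (Nat.le_ceil t).trans_lt (by linarith)
    have h01 : (0:ℝ) < (⌈t⌉₊ : ℝ) + 1 := by positivity
    exact intervalIntegral.integral_pos h01 ((hFt (x, y)).continuousOn)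
      (fun u _ => hF_nonneg _ u) ⟨t, ⟨ht0, htlt.le⟩, hFt_pos⟩
  obtain ⟨I, hI⟩ := hK_cpt.elim_finite_subcover _ hU_open hcover
  set m₀ : ℕ := I.sup id with hm₀
  refine ⟨(m₀ : ℝ) + 1, by positivity, ?_⟩
  intro x y hy
  have hmem := hI (Set.mk_mem_prod (Set.mem_univ x) hy)
  simp only [Set.mem_iUnion] at hmem
  obtain ⟨m, hmI, hm⟩ := hmem
  have hle : ((m:ℝ)+1) ≤ (m₀:ℝ)+1 := by
    have : m ≤ m₀ := Finset.le_sup (f := id) hmI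
    exact_mod_cast add_le_add_left (Nat.cast_le.mpr this) 1
  have hmono : (∫ t in (0:ℝ)..((m:ℝ)+1), F (x, y) t) ≤
      ∫ t in (0:ℝ)..((m₀:ℝ)+1), F (x, y) t := by
    refine intervalIntegral.integral_mono_interval le_rfl (by positivity) hle
      (Filter.Eventually.of_forall fun t => hF_nonneg _ t) ?_
    exact (hFt (x, y)).intervalIntegrable 0 ((m₀:ℝ)+1)
  show 0 < ∫ t in (0:ℝ)..((m₀:ℝ)+1), F (x, y) t
  exact lt_of_lt_of_le hm hmono
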